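/- Let γ_* : G → G be the automorphism γ_*((x_n)_n) = (α(x_{n+1}))_n. For x = (x_n)_n ∈ G, one has Σ_{n∈Z} α^n(x_n) = 0 in G_0 if and only if x lies in the image of (id_G − γ_*). -/

import Mathlib

open scoped BigOperators

noncomputable section

/-- The open interval `(0,1)` on which the functions of `G₀ = ℤ[t,t⁻¹,(1-t)⁻¹]` live. -/
def I01 : Set ℝ := Set.Ioo 0 1

/-- Membership in `G₀ = ℤ[t,t⁻¹,(1-t)⁻¹]`, viewed as continuous functions on `(0,1)`:
`f ∈ G₀` iff `f(t) = p(t)/(tᵐ(1-t)ⁿ)` for some integer polynomial `p`. -/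
def memG0 (f : I01 → ℝ) : Prop :=
  ∃ (p : Polynomial ℤ) (m n : ℕ),
    ∀ t : I01, f t = (Polynomial.aeval (t : ℝ) p) / ((t : ℝ) ^ m * (1 - (t : ℝ)) ^ n)

/-- The positive cone `G_F⁺ = {f ∈ G₀ : f > 0 on F} ∪ {0}`. -/
def memGFp (F : Set ℝ) (f : I01 → ℝ) : Prop :=
  memG0 f ∧ ((∀ t : I01, (t : ℝ) ∈ F → 0 < f t) ∨ f = 0)

/-- Membership in `G = ⊕_{n ∈ ℤ} G₀` (finitely supported sequences of elements of `G₀`). -/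
def memG (x : ℤ → I01 → ℝ) : Prop :=
  (∀ n : ℤ, memG0 (x n)) ∧ {n : ℤ | x n ≠ 0}.Finite

/-- `Σ_{n ∈ ℤ} αⁿ(xₙ)(t)`, where `α` is multiplication by `t/(1-t)`. -/
def sumAlpha (x : ℤ → I01 → ℝ) (t : I01) : ℝ :=
  ∑ᶠ n : ℤ, ((t : ℝ) / (1 - (t : ℝ))) ^ n * x n t

/-- `Σ_{n ∈ ℤ} xₙ(t)`. -/
def sumPlain (x : ℤ → I01 → ℝ) (t : I01) : ℝ := ∑ᶠ n : ℤ, x n t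

/-- The automorphism `γ₊ : G → G`, `γ₊((xₙ)ₙ) = (α(x_{n+1}))ₙ`. -/
def gammaStar (x : ℤ → I01 → ℝ) : ℤ → I01 → ℝ :=
  fun n t => ((t : ℝ) / (1 - (t : ℝ))) * x (n + 1) t

/-- The positive cone `G⁺` of `G` determined by `F` and `F₁`. -/
def memGplus (F F1 : Set ℝ) (x : ℤ → I01 → ℝ) : Prop :=
  memG x ∧
    (((∀ t : I01, (t : ℝ) ∈ F → 0 < sumAlpha x t) ∧
      (∀ t : I01, (t : ℝ) ∈ F1 → 0 < sumPlain x t)) ∨ x = 0)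

/-- The cone `G⁺⁺ = {0} ∪ {x ∈ G : Σₙ αⁿ(xₙ) > 0 on F}`. -/
def memGpp (F : Set ℝ) (x : ℤ → I01 → ℝ) : Prop :=
  memG x ∧ ((∀ t : I01, (t : ℝ) ∈ F → 0 < sumAlpha x t) ∨ x = 0)

/-- The sequence in `G` supported at `n = 0` with value `a`. -/
def delta0 (a : I01 → ℝ) : ℤ → I01 → ℝ := fun n => if n = 0 then a else 0


lemma I01_pos (t : I01) : 0 < (t:ℝ) := t.2.1
lemma I01_lt (t : I01) : (t:ℝ) < 1 := t.2.2
lemma c_pos (t : I01) : 0 < (t:ℝ) / (1 - (t:ℝ)) :=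
  div_pos t.2.1 (by linarith [I01_lt t])

lemma memG0_zero : memG0 (fun _ : I01 => (0:ℝ)) := ⟨0, 0, 0, by simp⟩

lemma memG0_add {f g : I01 → ℝ} (hf : memG0 f) (hg : memG0 g) :
    memG0 (fun t => f t + g t) := by
  obtain ⟨p, m, n, hp⟩ := hf
  obtain ⟨q, m', n', hq⟩ := hg
  refine ⟨p * Polynomial.X ^ m' * (1 - Polynomial.X) ^ n'
      + q * Polynomial.X ^ m * (1 - Polynomial.X) ^ n, m + m', n + n', fun t => ?_⟩
  have ht0 : (t:ℝ) ≠ 0 := ne_of_gt (I01_pos t)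
  have ht1 : (1:ℝ) - (t:ℝ) ≠ 0 := by have := I01_lt t; intro h; linarith
  show f t + g t = _
  rw [hp t, hq t]
  simp only [map_add, map_mul, map_pow, map_sub, map_one, Polynomial.aeval_X]
  field_simp
  ring

lemma memG0_cmul {f : I01 → ℝ} (hf : memG0 f) :
    memG0 (fun t => ((t:ℝ) / (1 - (t:ℝ))) * f t) := by
  obtain ⟨p, m, n, hp⟩ := hf
  refine ⟨Polynomial.X * p, m, n + 1, fun t => ?_⟩
  have ht0 : (t:ℝ) ≠ 0 := ne_of_gt (I01_pos t)
  have ht1 : (1:ℝ) - (t:ℝ) ≠ 0 := by have := I01_lt t; intro h; linarith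
  show (t:ℝ) / (1 - (t:ℝ)) * f t = _
  rw [hp t]
  simp only [map_mul, Polynomial.aeval_X, pow_succ]
  field_simp

lemma memG0_cpow {f : I01 → ℝ} (hf : memG0 f) (j : ℕ) :
    memG0 (fun t => ((t:ℝ) / (1 - (t:ℝ))) ^ j * f t) := by
  induction j with
  | zero => simpa using hf
  | succ j ih =>
      have := memG0_cmul ih
      convert this using 2 with t
      rw [pow_succ]; ring

lemma memG0_sum {ι : Type*} (s : Finset ι) (g : ι → I01 → ℝ)
    (h : ∀ k ∈ s, memG0 (g k)) : memG0 (fun t => ∑ k ∈ s, g k t) := by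
  classical
  induction s using Finset.cons_induction with
  | empty => simpa using memG0_zero
  | cons a s ha ih =>
      simp only [Finset.sum_cons]
      exact memG0_add (h a (by simp)) (ih fun k hk => h k (by simp [hk]))
/-- for `x ∈ G`, `Σₙ αⁿ(xₙ) = 0` iff `x ∈ (id - γ₊)(G)`. -/
theorem stmt9 (x : ℤ → I01 → ℝ) (hx : memG x) :
    (∀ t : I01, sumAlpha x t = 0) ↔ ∃ y : ℤ → I01 → ℝ, memG y ∧ x = y - gammaStar y := by
  classical
  obtain ⟨hG0, hfin⟩ := hx
  have hc0 : ∀ t : I01, (t:ℝ) / (1 - (t:ℝ)) ≠ 0 := fun t => ne_of_gt (c_pos t)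
  constructor
  · intro hsum
    set N : ℤ := ((hfin.toFinset.sup fun n => n.natAbs : ℕ) : ℤ) with hN
    have hNx : ∀ n : ℤ, (N < n ∨ n < -N) → x n = 0 := by
      intro n hn
      by_contra h
      have hmem : n ∈ hfin.toFinset := hfin.mem_toFinset.mpr h
      have h2 : n.natAbs ≤ hfin.toFinset.sup (fun n : ℤ => n.natAbs) :=
        Finset.le_sup hmem
      omega
    set y : ℤ → I01 → ℝ :=
      fun n t => ∑ k ∈ Finset.Icc n N, ((t:ℝ) / (1 - (t:ℝ))) ^ (k - n) * x k t with hy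
    -- support of the summand of sumAlpha is inside Icc (-N) N
    have hsupp_sa : ∀ t : I01,
        Function.support (fun k : ℤ => ((t:ℝ) / (1 - (t:ℝ))) ^ k * x k t) ⊆
          ↑(Finset.Icc (-N) N) := by
      intro t k hk
      simp only [Function.mem_support] at hk
      simp only [Finset.coe_Icc, Set.mem_Icc]
      by_contra hcon
      push_neg at hcon
      have : x k = 0 := hNx k (by omega)
      simp [this] at hk
    -- y n vanishes for n outside Icc (-N) N (indeed for n ≤ -N too, but we only need outside)
    have hy_top : ∀ n : ℤ, N < n → y n = 0 := by
      intro n hn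
      funext t
      have : Finset.Icc n N = ∅ := Finset.Icc_eq_empty (by omega)
      simp [hy, this]
    have hy_bot : ∀ n : ℤ, n ≤ -N → y n = 0 := by
      intro n hn
      funext t
      have hsub : Function.support (fun k : ℤ => ((t:ℝ) / (1 - (t:ℝ))) ^ k * x k t) ⊆
          ↑(Finset.Icc n N) := by
        refine (hsupp_sa t).trans ?_
        intro k hk
        simp only [Finset.coe_Icc, Set.mem_Icc] at hk ⊢
        omega
      have hsa : sumAlpha x t = ∑ k ∈ Finset.Icc n N, ((t:ℝ) / (1 - (t:ℝ))) ^ k * x k t :=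
        finsum_eq_sum_of_support_subset _ hsub
      have : y n t = ((t:ℝ) / (1 - (t:ℝ))) ^ (-n) * sumAlpha x t := by
        rw [hsa, Finset.mul_sum]
        refine Finset.sum_congr rfl fun k hk => ?_
        rw [← mul_assoc, ← zpow_add₀ (hc0 t), show -n + k = k - n from by ring]
      rw [hsum t, mul_zero] at this
      simpa using this
    refine ⟨y, ⟨?_, ?_⟩, ?_⟩
    · -- each y n is in G0
      intro n
      apply memG0_sum
      intro k hk
      simp only [Finset.mem_Icc] at hk
      have hnn : (0:ℤ) ≤ k - n := by omega
      have heq : (fun t : I01 => ((t:ℝ) / (1 - (t:ℝ))) ^ (k - n) * x k t)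
          = fun t : I01 => ((t:ℝ) / (1 - (t:ℝ))) ^ ((k - n).toNat) * x k t := by
        funext t
        rw [← zpow_natCast, Int.toNat_of_nonneg hnn]
      rw [heq]
      exact memG0_cpow (hG0 k) _
    · -- finite support
      apply Set.Finite.subset (Finset.Icc (-N) N).finite_toSet
      intro n hn
      simp only [Set.mem_setOf_eq] at hn
      simp only [Finset.coe_Icc, Set.mem_Icc]
      by_contra hcon
      push_neg at hcon
      rcases lt_or_ge N n with h | h
      · exact hn (hy_top n h)
      · exact hn (hy_bot n (by omega))
    · -- x = y - γ₊ y
      funext n t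
      have hrec : y n t = x n t + ((t:ℝ) / (1 - (t:ℝ))) * y (n + 1) t := by
        rcases le_or_gt n N with hn | hn
        · have hins : Finset.Icc n N = insert n (Finset.Icc (n + 1) N) := by
            ext k
            simp only [Finset.mem_Icc, Finset.mem_insert]
            omega
          rw [hy]
          simp only []
          rw [hins, Finset.sum_insert (by simp [Finset.mem_Icc])]
          rw [sub_self, zpow_zero, one_mul]
          congr 1
          rw [Finset.mul_sum]
          refine Finset.sum_congr rfl fun k hk => ?_
          rw [show k - n = 1 + (k - (n + 1)) from by ring, zpow_add₀ (hc0 t),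
            zpow_one, mul_assoc]
        · have h1 : y n = 0 := hy_top n hn
          have h2 : y (n + 1) = 0 := hy_top (n + 1) (by omega)
          have h3 : x n = 0 := hNx n (Or.inl hn)
          simp [h1, h2, h3]
      simp only [Pi.sub_apply, gammaStar]
      rw [hrec]; ring
  · rintro ⟨y, ⟨hyG0, hyfin⟩, rfl⟩
    intro t
    set c : ℝ := (t:ℝ) / (1 - (t:ℝ)) with hc
    have hcne : c ≠ 0 := hc0 t
    set g : ℤ → ℝ := fun n => c ^ n * y n t with hg
    have hgsupp : Function.support g ⊆ {n : ℤ | y n ≠ 0} := by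
      intro n hn
      simp only [Function.mem_support, hg] at hn
      simp only [Set.mem_setOf_eq]
      intro h
      simp [h] at hn
    have hgfin : (Function.support g).Finite := hyfin.subset hgsupp
    -- bound the support of g
    obtain ⟨s, hs⟩ : ∃ s : Finset ℤ, Function.support g ⊆ ↑s := ⟨hgfin.toFinset, by simp⟩
    set M : ℤ := ((s.sup fun n => n.natAbs : ℕ) : ℤ) with hM
    have hgM : ∀ n : ℤ, g n ≠ 0 → -M ≤ n ∧ n ≤ M := by
      intro n hn
      have hmem : n ∈ s := hs hn
      have h2 : n.natAbs ≤ s.sup (fun n : ℤ => n.natAbs) := Finset.le_sup hmem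
      omega
    have hterm : ∀ n : ℤ, c ^ n * (y - gammaStar y) n t = g n - g (n + 1) := by
      intro n
      simp only [Pi.sub_apply, gammaStar, hg]
      rw [zpow_add_one₀ hcne]
      ring
    have hsum1 : sumAlpha (y - gammaStar y) t = ∑ᶠ n : ℤ, (g n - g (n + 1)) := by
      unfold sumAlpha
      exact finsum_congr hterm
    rw [hsum1]
    have hsub1 : Function.support (fun n : ℤ => g n - g (n + 1)) ⊆
        ↑(Finset.Icc (-M - 1) M) := by
      intro n hn
      simp only [Function.mem_support] at hn
      simp only [Finset.coe_Icc, Set.mem_Icc]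
      by_contra hcon
      push_neg at hcon
      have h1 : g n = 0 := by
        by_contra h; have := hgM n h; omega
      have h2 : g (n + 1) = 0 := by
        by_contra h; have := hgM (n + 1) h; omega
      rw [h1, h2, sub_self] at hn
      exact hn rfl
    rw [finsum_eq_sum_of_support_subset _ hsub1, Finset.sum_sub_distrib]
    have hre : ∑ n ∈ Finset.Icc (-M - 1) M, g (n + 1)
        = ∑ n ∈ Finset.Icc (-M) (M + 1), g n := by
      apply Finset.sum_nbij' (fun n => n + 1) (fun n => n - 1) <;>
        intros <;> simp_all [Finset.mem_Icc] <;> omega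
    have hgsub : ∀ a b : ℤ, a ≤ -M → M ≤ b →
        ∑ n ∈ Finset.Icc a b, g n = ∑ᶠ n : ℤ, g n := by
      intro a b ha hb
      refine (finsum_eq_sum_of_support_subset _ ?_).symm
      intro n hn
      have := hgM n hn
      simp only [Finset.coe_Icc, Set.mem_Icc]
      omega
    rw [hre, hgsub _ _ (by omega) (by omega), hgsub _ _ (by omega) (by omega), sub_self]

end
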